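/- For every ε > 0 there exists N₀ such that for all n ≥ N₀, every order-n Latin square has at most ((1+ε)/e)^n · n! transversals. -/

import Mathlib

/-- An order-`n` Latin square: an `n × n` matrix over `Fin n` in which every
symbol occurs exactly once in every row and exactly once in every column. -/
def IsLatinSquare {n : ℕ} (L : Fin n → Fin n → Fin n) : Prop :=
  (∀ i, Function.Bijective (L i)) ∧ ∀ j, Function.Bijective fun i => L i j

/-- A transversal of `L`, encoded by the permutation `σ` assigning to each row
the column of its chosen cell: the cells `(i, σ i)` lie in pairwise distinct rows
and columns, and the symbols `L i (σ i)` comprise each symbol exactly once. -/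
def IsTransversal {n : ℕ} (L : Fin n → Fin n → Fin n) (σ : Equiv.Perm (Fin n)) : Prop :=
  Function.Bijective fun i => L i (σ i)

/-- The number of transversals of `L`. -/
noncomputable def transversalCount {n : ℕ} (L : Fin n → Fin n → Fin n) : ℕ :=
  Nat.card {σ : Equiv.Perm (Fin n) // IsTransversal L σ}


open Finset

set_option maxHeartbeats 1000000

namespace LTUB

lemma count3_le {α : Type*} [Fintype α] [DecidableEq α] {a b c x y z : α}
    (hab : a ≠ b) (hac : a ≠ c) (hbc : b ≠ c) (hxy : x ≠ y) (hxz : x ≠ z) (hyz : y ≠ z) :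
    (Finset.univ.filter fun π : Equiv.Perm α => π a = x ∧ π b = y ∧ π c = z).card
      ≤ (Fintype.card α - 3).factorial := by
  classical
  have hcardp : Fintype.card {v // ¬ (v = a ∨ v = b ∨ v = c)} = Fintype.card α - 3 := by
    rw [Fintype.card_subtype_compl]
    congr 1
    rw [Fintype.card_subtype]
    have : (Finset.univ.filter fun v => v = a ∨ v = b ∨ v = c) = {a, b, c} := by
      ext v; simp [Finset.mem_insert]
    rw [this, Finset.card_insert_of_notMem (by simp [hab, hac]),
      Finset.card_insert_of_notMem (by simp [hbc]), Finset.card_singleton]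
  have key : ∀ π : Equiv.Perm α, (π a = x ∧ π b = y ∧ π c = z) →
      ∀ v, ¬ (v = a ∨ v = b ∨ v = c) ↔ ¬ (π v = x ∨ π v = y ∨ π v = z) := by
    rintro π ⟨h1, h2, h3⟩ v
    constructor
    · intro hv hcon
      apply hv
      rcases hcon with h | h | h
      · exact Or.inl (π.injective (by rw [h1, h]))
      · exact Or.inr (Or.inl (π.injective (by rw [h2, h])))
      · exact Or.inr (Or.inr (π.injective (by rw [h3, h])))
    · intro hv hcon
      apply hv
      rcases hcon with h | h | h
      · subst h; exact Or.inl h1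
      · subst h; exact Or.inr (Or.inl h2)
      · subst h; exact Or.inr (Or.inr h3)
  rw [← Fintype.card_subtype]
  have hinj : Function.Injective
      (fun π : {π : Equiv.Perm α // π a = x ∧ π b = y ∧ π c = z} =>
        (Equiv.subtypeEquiv π.1 (key π.1 π.2) :
          {v // ¬ (v = a ∨ v = b ∨ v = c)} ≃ {v // ¬ (v = x ∨ v = y ∨ v = z)})) := by
    rintro ⟨π₁, h1⟩ ⟨π₂, h2⟩ he
    ext v
    by_cases hv : (v = a ∨ v = b ∨ v = c)
    · rcases hv with h | h | h
      all_goals subst h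
      · rw [h1.1, h2.1]
      · rw [h1.2.1, h2.2.1]
      · rw [h1.2.2, h2.2.2]
    · have := congrArg (fun e => ((e : {v // ¬ (v = a ∨ v = b ∨ v = c)} ≃
        {v // ¬ (v = x ∨ v = y ∨ v = z)}) ⟨v, hv⟩ : α)) he
      simpa using this
  calc Fintype.card {π : Equiv.Perm α // π a = x ∧ π b = y ∧ π c = z}
      ≤ Fintype.card ({v // ¬ (v = a ∨ v = b ∨ v = c)} ≃ {v // ¬ (v = x ∨ v = y ∨ v = z)}) :=
        Fintype.card_le_of_injective _ hinj
    _ ≤ (Fintype.card α - 3).factorial := by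
        rcases isEmpty_or_nonempty ({v // ¬ (v = a ∨ v = b ∨ v = c)} ≃
          {v // ¬ (v = x ∨ v = y ∨ v = z)}) with h | he
        · rw [@Fintype.card_eq_zero _ _ h]; exact Nat.zero_le _
        · obtain ⟨e⟩ := he
          rw [Fintype.card_equiv e, hcardp]

/-- Equal-weight AM-GM. -/
lemma amgm {ι : Type*} (s : Finset ι) (f : ι → ℝ) (hf : ∀ i ∈ s, 0 ≤ f i) :
    ∏ i ∈ s, f i ≤ ((∑ i ∈ s, f i) / s.card) ^ s.card := by
  rcases s.eq_empty_or_nonempty with rfl | hs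
  · simp
  have hc : (0:ℝ) < s.card := Nat.cast_pos.mpr (Finset.card_pos.mpr hs)
  have h := Real.geom_mean_le_arith_mean_weighted s (fun _ => (s.card : ℝ)⁻¹) f
    (fun i _ => by positivity) (by simp [Finset.sum_const]; field_simp) hf
  have hprod : ∏ i ∈ s, f i ^ ((s.card : ℝ)⁻¹) = (∏ i ∈ s, f i) ^ ((s.card : ℝ)⁻¹) := by
    rw [← Real.finset_prod_rpow s f hf]
  rw [hprod] at h
  have hsum : ∑ i ∈ s, (s.card : ℝ)⁻¹ * f i = (∑ i ∈ s, f i) / s.card := by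
    rw [← Finset.mul_sum]; ring
  rw [hsum] at h
  have hP : (0:ℝ) ≤ ∏ i ∈ s, f i := Finset.prod_nonneg hf
  calc ∏ i ∈ s, f i = ((∏ i ∈ s, f i) ^ ((s.card : ℝ)⁻¹)) ^ ((s.card : ℝ)) := by
        rw [← Real.rpow_mul hP, inv_mul_cancel₀ hc.ne', Real.rpow_one]
    _ ≤ ((∑ i ∈ s, f i) / s.card) ^ ((s.card : ℝ)) :=
        Real.rpow_le_rpow (Real.rpow_nonneg hP _) h hc.le
    _ = ((∑ i ∈ s, f i) / s.card) ^ s.card := Real.rpow_natCast _ _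



variable {n : ℕ} (L : Fin n → Fin n → Fin n)

open Classical in
noncomputable def Tset : Finset (Equiv.Perm (Fin n)) :=
  Finset.univ.filter (fun σ => IsTransversal L σ)

lemma mem_Tset {σ : Equiv.Perm (Fin n)} : σ ∈ Tset L ↔ IsTransversal L σ := by
  simp [Tset]

def avail (π σ : Equiv.Perm (Fin n)) (k : ℕ) (i : Fin n) : Finset (Fin n) :=
  Finset.univ.filter
    (fun j => ∀ m : Fin n, (m : ℕ) < k → σ (π m) ≠ j ∧ L (π m) (σ (π m)) ≠ L i j)

noncomputable def Nv (π σ : Equiv.Perm (Fin n)) (K : Fin n) : ℕ :=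
  (avail L π σ (K : ℕ) (π K)).card

lemma avail_congr {π σ τ : Equiv.Perm (Fin n)} {k : ℕ} {i : Fin n}
    (h : ∀ m : Fin n, (m : ℕ) < k → σ (π m) = τ (π m)) :
    avail L π σ k i = avail L π τ k i := by
  unfold avail
  apply Finset.filter_congr
  intro j _
  constructor
  · intro hj m hm
    have := hj m hm
    rwa [h m hm] at this
  · intro hj m hm
    rw [h m hm]
    exact hj m hm

lemma self_mem_avail {π σ : Equiv.Perm (Fin n)} (hσ : IsTransversal L σ) (K : Fin n) :
    σ (π K) ∈ avail L π σ (K : ℕ) (π K) := by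
  unfold avail
  rw [Finset.mem_filter]
  refine ⟨Finset.mem_univ _, fun m hm => ?_⟩
  have hmK : m ≠ K := fun h => by subst h; omega
  have hπ : π m ≠ π K := fun h => hmK (π.injective h)
  exact ⟨fun h => hπ (σ.injective h), fun h => hπ (hσ.1 h)⟩

lemma Nv_pos {π σ : Equiv.Perm (Fin n)} (hσ : IsTransversal L σ) (K : Fin n) :
    0 < Nv L π σ K :=
  Finset.card_pos.mpr ⟨σ (π K), self_mem_avail L hσ K⟩

lemma kraft_aux (π : Equiv.Perm (Fin n)) :
    ∀ d k : ℕ, k + d = n → ∀ τ ∈ Tset L,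
      ∑ σ ∈ (Tset L).filter (fun σ => ∀ m : Fin n, (m : ℕ) < k → σ (π m) = τ (π m)),
        ∏ K ∈ Finset.univ.filter (fun K : Fin n => k ≤ (K : ℕ)), ((Nv L π σ K : ℝ))⁻¹ ≤ 1 := by
  intro d
  induction d with
  | zero =>
    intro k hk τ hτ
    have h1 : (Finset.univ.filter (fun K : Fin n => k ≤ (K : ℕ))) = ∅ := by
      apply Finset.filter_false_of_mem
      intro K _
      have := K.isLt
      omega
    have h2 : ((Tset L).filter
        (fun σ => ∀ m : Fin n, (m : ℕ) < k → σ (π m) = τ (π m))) = {τ} := by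
      ext σ
      simp only [Finset.mem_filter, Finset.mem_singleton]
      constructor
      · rintro ⟨hσ, hagree⟩
        refine Equiv.ext fun x => ?_
        have hlt := (π.symm x).isLt
        have := hagree (π.symm x) (by omega)
        simpa using this
      · rintro rfl
        exact ⟨hτ, fun _ _ => rfl⟩
    rw [h1, h2]
    simp
  | succ d ih =>
    intro k hk τ hτ
    have hkn : k < n := by omega
    set K₀ : Fin n := ⟨k, hkn⟩ with hK₀
    have hK₀val : (K₀ : ℕ) = k := rfl
    have hK₀mem : K₀ ∉ Finset.univ.filter (fun K : Fin n => k + 1 ≤ (K : ℕ)) := by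
      simp [hK₀]
    have hsplit : Finset.univ.filter (fun K : Fin n => k ≤ (K : ℕ))
        = insert K₀ (Finset.univ.filter (fun K : Fin n => k + 1 ≤ (K : ℕ))) := by
      ext K
      simp only [Finset.mem_filter, Finset.mem_univ, true_and, Finset.mem_insert]
      constructor
      · intro h
        rcases eq_or_lt_of_le h with h' | h'
        · left; exact Fin.ext h'.symm
        · right; omega
      · rintro (rfl | h) <;> omega
    set Sfin := (Tset L).filter (fun σ => ∀ m : Fin n, (m : ℕ) < k → σ (π m) = τ (π m)) with hSfin
    have hNconst : ∀ σ ∈ Sfin, Nv L π σ K₀ = Nv L π τ K₀ := by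
      intro σ hσ
      rw [hSfin, Finset.mem_filter] at hσ
      unfold Nv
      rw [avail_congr L (fun m hm => hσ.2 m hm)]
    have hNpos : 0 < Nv L π τ K₀ := Nv_pos L ((mem_Tset L).mp hτ) K₀
    have step1 : ∑ σ ∈ Sfin, ∏ K ∈ Finset.univ.filter (fun K : Fin n => k ≤ (K : ℕ)),
          ((Nv L π σ K : ℝ))⁻¹
        = ((Nv L π τ K₀ : ℝ))⁻¹ * ∑ σ ∈ Sfin,
            ∏ K ∈ Finset.univ.filter (fun K : Fin n => k + 1 ≤ (K : ℕ)), ((Nv L π σ K : ℝ))⁻¹ := by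
      rw [Finset.mul_sum]
      apply Finset.sum_congr rfl
      intro σ hσ
      rw [hsplit, Finset.prod_insert hK₀mem, hNconst σ hσ]
    rw [step1]
    have hinner : ∑ σ ∈ Sfin,
        ∏ K ∈ Finset.univ.filter (fun K : Fin n => k + 1 ≤ (K : ℕ)), ((Nv L π σ K : ℝ))⁻¹
        ≤ (Nv L π τ K₀ : ℝ) := by
      rw [← Finset.sum_fiberwise_of_maps_to
        (g := fun σ : Equiv.Perm (Fin n) => σ (π K₀))
        (t := Sfin.image (fun σ => σ (π K₀)))
        (fun σ hσ => Finset.mem_image_of_mem _ hσ)]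
      have himg : Sfin.image (fun σ => σ (π K₀)) ⊆ avail L π τ k (π K₀) := by
        intro v hv
        obtain ⟨σv, hσv, rfl⟩ := Finset.mem_image.mp hv
        have hσvT : IsTransversal L σv := (mem_Tset L).mp (Finset.mem_filter.mp hσv).1
        have := self_mem_avail L (π := π) hσvT K₀
        rwa [avail_congr L (fun m hm => (Finset.mem_filter.mp hσv).2 m hm)] at this
      calc ∑ v ∈ Sfin.image (fun σ => σ (π K₀)),
            ∑ σ ∈ Sfin.filter (fun σ => σ (π K₀) = v),
              ∏ K ∈ Finset.univ.filter (fun K : Fin n => k + 1 ≤ (K : ℕ)), ((Nv L π σ K : ℝ))⁻¹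
          ≤ ∑ v ∈ Sfin.image (fun σ => σ (π K₀)), 1 := by
            apply Finset.sum_le_sum
            intro v hv
            obtain ⟨σv, hσv, hev⟩ := Finset.mem_image.mp hv
            have hσvmem : σv ∈ Tset L := (Finset.mem_filter.mp hσv).1
            have hfib : Sfin.filter (fun σ => σ (π K₀) = v)
                = (Tset L).filter
                    (fun σ => ∀ m : Fin n, (m : ℕ) < k + 1 → σ (π m) = σv (π m)) := by
              ext ρ
              simp only [hSfin, Finset.mem_filter, and_assoc]
              constructor
              · rintro ⟨hT, hagree, hval⟩
                refine ⟨hT, fun m hm => ?_⟩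
                rcases Nat.lt_or_ge (m : ℕ) k with h' | h'
                · rw [hagree m h', ← (Finset.mem_filter.mp hσv).2 m h']
                · have hmK : m = K₀ := Fin.ext (by omega)
                  subst hmK
                  rw [hval, ← hev]
              · rintro ⟨hT, hagree⟩
                have hτv : ∀ m : Fin n, (m : ℕ) < k → σv (π m) = τ (π m) :=
                  (Finset.mem_filter.mp hσv).2
                refine ⟨hT, fun m hm => by rw [hagree m (by omega), hτv m hm], ?_⟩
                rw [hagree K₀ (by omega), hev]
            rw [hfib]
            exact ih (k + 1) (by omega) σv hσvmem
        _ = ((Sfin.image fun σ => σ (π K₀)).card : ℝ) := by rw [Finset.sum_const]; simp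
        _ ≤ (Nv L π τ K₀ : ℝ) := by
            unfold Nv
            exact_mod_cast Finset.card_le_card himg
    calc ((Nv L π τ K₀ : ℝ))⁻¹ * ∑ σ ∈ Sfin,
          ∏ K ∈ Finset.univ.filter (fun K : Fin n => k + 1 ≤ (K : ℕ)), ((Nv L π σ K : ℝ))⁻¹
        ≤ ((Nv L π τ K₀ : ℝ))⁻¹ * (Nv L π τ K₀ : ℝ) :=
          mul_le_mul_of_nonneg_left hinner (by positivity)
      _ = 1 := inv_mul_cancel₀ (by exact_mod_cast hNpos.ne')

lemma kraft (π : Equiv.Perm (Fin n)) :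
    ∑ σ ∈ Tset L, ∏ K : Fin n, ((Nv L π σ K : ℝ))⁻¹ ≤ 1 := by
  rcases (Tset L).eq_empty_or_nonempty with h | ⟨τ, hτ⟩
  · rw [h]; simp
  · have := kraft_aux L π n 0 (by omega) τ hτ
    have h1 : (Finset.univ.filter (fun K : Fin n => 0 ≤ (K : ℕ))) = Finset.univ := by
      apply Finset.filter_true_of_mem; intro _ _; omega
    have h2 : ((Tset L).filter (fun σ => ∀ m : Fin n, (m : ℕ) < 0 → σ (π m) = τ (π m)))
        = Tset L := by
      apply Finset.filter_true_of_mem; intro _ _ _ h; omega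
    rwa [h1, h2] at this


lemma sum_Nv_le (hL : IsLatinSquare L) {σ : Equiv.Perm (Fin n)} (hσ : IsTransversal L σ)
    (K : Fin n) :
    ∑ π : Equiv.Perm (Fin n), Nv L π σ K
      ≤ n.factorial + (n - 1 - (K:ℕ)) * (n - 2 - (K:ℕ)) * (n * (n-1) * (n-3).factorial) := by
  classical
  set k : ℕ := (K : ℕ) with hkdef
  set g : Fin n → Fin n := fun r => L r (σ r) with hg
  set gE : Fin n ≃ Fin n := Equiv.ofBijective g hσ with hgE
  have hgEa : ∀ r, gE r = g r := fun r => rfl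
  set h : Fin n → Fin n → Fin n := fun i u => gE.symm (L i (σ u)) with hh
  have h_eq : ∀ i u, gE (h i u) = L i (σ u) := fun i u => gE.apply_symm_apply _
  have h_self : ∀ i, h i i = i := by
    intro i
    apply gE.injective
    rw [h_eq, hgEa]
  have h_ne_fst : ∀ i u, u ≠ i → h i u ≠ i := by
    intro i u hu heq
    apply hu
    have : L i (σ u) = L i (σ i) := by rw [← h_eq i u, heq, hgEa]
    exact σ.injective ((hL.1 i).injective this)
  have h_ne_self : ∀ i u, u ≠ i → h i u ≠ u := by
    intro i u hu heq
    apply hu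
    have : L u (σ u) = L i (σ u) := by rw [← h_eq i u, heq, hgEa]
    exact (hL.2 (σ u)).injective this
  -- positional description of Nv
  have N_eq : ∀ π : Equiv.Perm (Fin n), Nv L π σ K
      = 1 + (univ.filter fun u : Fin n =>
          k < (π.symm u : ℕ) ∧ k < (π.symm (h (π K) u) : ℕ)).card := by
    intro π
    set posSet := univ.filter fun u : Fin n =>
      k < (π.symm u : ℕ) ∧ k < (π.symm (h (π K) u) : ℕ) with hposSet
    set uSet := univ.filter fun u : Fin n =>
      ∀ m : Fin n, (m : ℕ) < k → π m ≠ u ∧ π m ≠ h (π K) u with huSet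
    have step1 : Nv L π σ K = uSet.card := by
      unfold Nv avail
      apply Finset.card_bij' (fun j _ => σ.symm j) (fun u _ => σ u)
      · intro j hj
        rw [Finset.mem_filter] at hj ⊢
        refine ⟨Finset.mem_univ _, fun m hm => ?_⟩
        obtain ⟨h1, h2⟩ := hj.2 m hm
        constructor
        · intro he; exact h1 (by rw [he]; exact (σ.apply_symm_apply j).symm ▸ rfl)
        · intro he
          apply h2
          have : g (π m) = gE (h (π K) (σ.symm j)) := by rw [he, hgEa]
          rw [h_eq, σ.apply_symm_apply] at this
          exact this
      · intro u hu
        rw [Finset.mem_filter] at hu ⊢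
        refine ⟨Finset.mem_univ _, fun m hm => ?_⟩
        obtain ⟨h1, h2⟩ := hu.2 m hm
        constructor
        · intro he; exact h1 (σ.injective he)
        · intro he
          apply h2
          apply gE.injective
          rw [h_eq, hgEa]
          exact he
      · intro j _; exact σ.apply_symm_apply j
      · intro u _; exact σ.symm_apply_apply u
    have step2 : uSet = insert (π K) posSet := by
      ext u
      rw [huSet, hposSet, Finset.mem_insert, Finset.mem_filter, Finset.mem_filter]
      constructor
      · rintro ⟨-, hu⟩
        by_cases hc : u = π K
        · exact Or.inl hc
        · right
          refine ⟨Finset.mem_univ _, ?_, ?_⟩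
          · have h1 : ¬ ((π.symm u : ℕ) < k) := fun hlt => (hu (π.symm u) hlt).1 (π.apply_symm_apply u)
            have h2 : π.symm u ≠ K := fun he => hc (by rw [← π.apply_symm_apply u, he])
            have h3 : (π.symm u : ℕ) ≠ k := fun he => h2 (Fin.ext he)
            omega
          · have hw : h (π K) u ≠ π K := h_ne_fst (π K) u hc
            have h1 : ¬ ((π.symm (h (π K) u) : ℕ) < k) := fun hlt =>
              (hu (π.symm (h (π K) u)) hlt).2 (π.apply_symm_apply _)
            have h2 : π.symm (h (π K) u) ≠ K := fun he => hw (by rw [← π.apply_symm_apply (h (π K) u), he])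
            have h3 : (π.symm (h (π K) u) : ℕ) ≠ k := fun he => h2 (Fin.ext he)
            omega
      · rintro (rfl | ⟨-, hp1, hp2⟩)
        · refine ⟨Finset.mem_univ _, fun m hm => ?_⟩
          have hmK : m ≠ K := fun he => by subst he; omega
          have : π m ≠ π K := fun he => hmK (π.injective he)
          rw [h_self]
          exact ⟨this, this⟩
        · refine ⟨Finset.mem_univ _, fun m hm => ?_⟩
          constructor
          · intro he
            have : π.symm u = m := by rw [← he, π.symm_apply_apply]
            rw [this] at hp1; omega
          · intro he
            have : π.symm (h (π K) u) = m := by rw [← he, π.symm_apply_apply]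
            rw [this] at hp2; omega
    have hnotmem : π K ∉ posSet := by
      rw [hposSet, Finset.mem_filter]
      rintro ⟨-, hp, -⟩
      rw [π.symm_apply_apply] at hp
      omega
    rw [step1, step2, Finset.card_insert_of_notMem hnotmem]
    omega
  -- sum it
  have sum_split : ∑ π : Equiv.Perm (Fin n), Nv L π σ K
      = n.factorial + ∑ π : Equiv.Perm (Fin n),
          (univ.filter fun u : Fin n =>
            k < (π.symm u : ℕ) ∧ k < (π.symm (h (π K) u) : ℕ)).card := by
    rw [Finset.sum_congr rfl (fun π _ => N_eq π), Finset.sum_add_distrib]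
    congr 1
    rw [Finset.sum_const, smul_eq_mul, mul_one, Finset.card_univ, Fintype.card_perm,
      Fintype.card_fin]
  rw [sum_split]
  apply Nat.add_le_add_left
  -- the pairs set
  set Bset : Finset (Equiv.Perm (Fin n) × Fin n) :=
    (univ ×ˢ univ).filter
      (fun x => k < (x.1.symm x.2 : ℕ) ∧ k < (x.1.symm (h (x.1 K) x.2) : ℕ)) with hBset
  have claim1 : ∑ π : Equiv.Perm (Fin n),
      (univ.filter fun u : Fin n =>
        k < (π.symm u : ℕ) ∧ k < (π.symm (h (π K) u) : ℕ)).card = Bset.card := by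
    rw [Finset.card_eq_sum_card_fiberwise
      (f := fun x : Equiv.Perm (Fin n) × Fin n => x.1) (t := univ)
      (fun x _ => Finset.mem_univ _)]
    apply Finset.sum_congr rfl
    intro π _
    apply Finset.card_bij (fun u _ => (π, u))
    · intro u hu
      rw [Finset.mem_filter] at hu
      rw [Finset.mem_filter, hBset, Finset.mem_filter]
      exact ⟨⟨Finset.mem_product.mpr ⟨Finset.mem_univ _, Finset.mem_univ _⟩, hu.2⟩, rfl⟩
    · intro u _ v _ he
      exact (Prod.mk.injEq _ _ _ _).mp he |>.2
    · rintro ⟨π', u⟩ hx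
      rw [Finset.mem_filter] at hx
      obtain ⟨hx1, hx2⟩ := hx
      rw [hBset, Finset.mem_filter] at hx1
      subst hx2
      exact ⟨u, Finset.mem_filter.mpr ⟨Finset.mem_univ _, hx1.2⟩, rfl⟩
  rw [claim1]
  -- the position pairs
  set bigset : Finset (Fin n) := univ.filter (fun p : Fin n => k < (p : ℕ)) with hbigset
  have hbigcard : bigset.card = n - (k + 1) := by
    rw [← Nat.card_Ico (k+1) n]
    refine Finset.card_bij' (fun (p : Fin n) (_ : p ∈ bigset) => (p : ℕ))
      (fun m (hm : m ∈ Finset.Ico (k+1) n) => (⟨m, (Finset.mem_Ico.mp hm).2⟩ : Fin n))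
      ?_ ?_ ?_ ?_
    · intro p hp
      rw [hbigset, Finset.mem_filter] at hp
      rw [Finset.mem_Ico]
      exact ⟨hp.2, p.isLt⟩
    · intro m hm
      rw [hbigset, Finset.mem_filter]
      exact ⟨Finset.mem_univ _, by simpa using (Finset.mem_Ico.mp hm).1⟩
    · intro p _; rfl
    · intro m _; rfl
  have hmaps : ∀ x ∈ Bset, (x.1.symm x.2, x.1.symm (h (x.1 K) x.2)) ∈ bigset.offDiag := by
    intro x hx
    rw [hBset, Finset.mem_filter] at hx
    obtain ⟨-, hx1, hx2⟩ := hx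
    rw [Finset.mem_offDiag]
    refine ⟨Finset.mem_filter.mpr ⟨Finset.mem_univ _, hx1⟩,
      Finset.mem_filter.mpr ⟨Finset.mem_univ _, hx2⟩, ?_⟩
    intro he
    have hu2 : x.2 ≠ x.1 K := by
      intro he2
      rw [he2, Equiv.symm_apply_apply] at hx1
      omega
    have : x.2 = h (x.1 K) x.2 := by
      have := congrArg x.1 he
      rwa [Equiv.apply_symm_apply, Equiv.apply_symm_apply] at this
    exact h_ne_self (x.1 K) x.2 hu2 this.symm
  rw [Finset.card_eq_sum_card_fiberwise hmaps]
  have fiber_bound : ∀ pq ∈ bigset.offDiag,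
      (Bset.filter (fun x => (x.1.symm x.2, x.1.symm (h (x.1 K) x.2)) = pq)).card
        ≤ n * (n-1) * (n-3).factorial := by
    rintro ⟨p, q⟩ hpq
    rw [Finset.mem_offDiag] at hpq
    obtain ⟨hp, hq, hpq'⟩ := hpq
    rw [hbigset, Finset.mem_filter] at hp hq
    replace hp := hp.2
    replace hq := hq.2
    dsimp only at hp hq
    have hKp : K ≠ p := by rintro rfl; omega
    have hKq : K ≠ q := by rintro rfl; omega
    set Cset : Finset (Equiv.Perm (Fin n)) :=
      univ.filter (fun π => π q = h (π K) (π p)) with hCset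
    have hsub : (Bset.filter (fun x => (x.1.symm x.2, x.1.symm (h (x.1 K) x.2)) = (p, q))).card
        ≤ Cset.card := by
      apply Finset.card_le_card_of_injOn (fun x => x.1)
      · intro x hx
        rw [Finset.mem_coe, Finset.mem_filter] at hx
        obtain ⟨-, hx2⟩ := hx
        rw [Prod.mk.injEq] at hx2
        obtain ⟨he1, he2⟩ := hx2
        have hu : x.2 = x.1 p := by rw [← he1, Equiv.apply_symm_apply]
        have hw : h (x.1 K) x.2 = x.1 q := by rw [← he2, Equiv.apply_symm_apply]
        rw [Finset.mem_coe, hCset, Finset.mem_filter]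
        exact ⟨Finset.mem_univ _, by rw [← hu, hw]⟩
      · intro x hx y hy he
        have he' : x.1 = y.1 := he
        simp only [Finset.mem_coe, Finset.mem_filter, Prod.mk.injEq] at hx hy
        have hx2 : x.2 = x.1 p := by rw [← hx.2.1, Equiv.apply_symm_apply]
        have hy2 : y.2 = y.1 p := by rw [← hy.2.1, Equiv.apply_symm_apply]
        exact Prod.ext he' (by rw [hx2, hy2, he'])
    refine le_trans hsub ?_
    -- count Cset
    rw [Finset.card_eq_sum_card_fiberwise
      (f := fun π : Equiv.Perm (Fin n) => (π K, π p)) (t := univ.offDiag)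
      (fun π _ => Finset.mem_offDiag.mpr
        ⟨Finset.mem_univ _, Finset.mem_univ _, fun he => hKp (π.injective he)⟩)]
    have inner : ∀ iv ∈ (univ : Finset (Fin n)).offDiag,
        (Cset.filter (fun π => (π K, π p) = iv)).card ≤ (n-3).factorial := by
      rintro ⟨i, v⟩ hiv
      rw [Finset.mem_offDiag] at hiv
      have hvi : v ≠ i := fun he => hiv.2.2 he.symm
      have hfib : Cset.filter (fun π => (π K, π p) = (i, v))
          = univ.filter (fun π : Equiv.Perm (Fin n) => π K = i ∧ π p = v ∧ π q = h i v) := by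
        ext π
        rw [Finset.mem_filter, hCset, Finset.mem_filter, Finset.mem_filter, Prod.mk.injEq]
        constructor
        · rintro ⟨⟨-, hC⟩, h1, h2⟩
          exact ⟨Finset.mem_univ _, h1, h2, by rw [← h1, ← h2]; exact hC⟩
        · rintro ⟨-, h1, h2, h3⟩
          exact ⟨⟨Finset.mem_univ _, by rw [h1, h2]; exact h3⟩, h1, h2⟩
      rw [hfib]
      have := count3_le (α := Fin n) (a := K) (b := p) (c := q) (x := i) (y := v) (z := h i v)
        hKp hKq hpq' (fun he => hvi he.symm)
        (fun he => h_ne_fst i v hvi he.symm) (fun he => h_ne_self i v hvi he.symm)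
      rwa [Fintype.card_fin] at this
    calc ∑ iv ∈ (univ : Finset (Fin n)).offDiag,
          (Cset.filter (fun π => (π K, π p) = iv)).card
        ≤ ∑ _iv ∈ (univ : Finset (Fin n)).offDiag, (n-3).factorial :=
          Finset.sum_le_sum inner
      _ = (univ : Finset (Fin n)).offDiag.card * (n-3).factorial := by
          rw [Finset.sum_const, smul_eq_mul]
      _ = n * (n-1) * (n-3).factorial := by
          rw [Finset.offDiag_card, Finset.card_univ, Fintype.card_fin]
          congr 1
          cases n with
          | zero => rfl
          | succ m => simp [Nat.succ_sub_one, Nat.succ_mul, Nat.mul_succ]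
  calc ∑ pq ∈ bigset.offDiag,
        (Bset.filter (fun x => (x.1.symm x.2, x.1.symm (h (x.1 K) x.2)) = pq)).card
      ≤ ∑ _pq ∈ bigset.offDiag, n * (n-1) * (n-3).factorial :=
        Finset.sum_le_sum fiber_bound
    _ = bigset.offDiag.card * (n * (n-1) * (n-3).factorial) := by
        rw [Finset.sum_const, smul_eq_mul]
    _ ≤ (n - 1 - k) * (n - 2 - k) * (n * (n-1) * (n-3).factorial) := by
        apply Nat.mul_le_mul_right
        rw [Finset.offDiag_card, hbigcard]
        set b := n - (k+1) with hb
        have h1 : n - 1 - k = b := by omega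
        have h2 : n - 2 - k = b - 1 := by omega
        rw [h1, h2]
        cases b with
        | zero => simp
        | succ m => simp [Nat.succ_sub_one, Nat.succ_mul, Nat.mul_succ]


lemma fact_ratio (hn : 3 ≤ n) : (n * (n-1) * (n-3).factorial) * (n - 2) = n.factorial := by
  obtain ⟨m, rfl⟩ : ∃ m, n = m + 3 := ⟨n - 3, by omega⟩
  have h1 : m + 3 - 1 = m + 2 := by omega
  have h2 : m + 3 - 2 = m + 1 := by omega
  have h3 : m + 3 - 3 = m := by omega
  rw [h1, h2, h3]
  show (m + 3) * (m + 2) * m.factorial * (m + 1) = (m + 3).factorial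
  rw [show m + 3 = (m + 2) + 1 from rfl, Nat.factorial_succ,
    show m + 2 = (m + 1) + 1 from rfl, Nat.factorial_succ, Nat.factorial_succ]
  ring

lemma main_bound (hL : IsLatinSquare L) (hn : 3 ≤ n) :
    (((Tset L).card : ℝ)) ≤ ∏ K : Fin n,
      (1 + (((n - 1 - (K:ℕ)) * (n - 2 - (K:ℕ)) : ℕ) : ℝ) / ((n:ℝ) - 2)) := by
  classical
  have hq : (0:ℝ) < (n:ℝ) - 2 := by
    have : (3:ℝ) ≤ (n:ℝ) := by exact_mod_cast hn
    linarith
  set D : Fin n → ℝ := fun K => 1 + (((n - 1 - (K:ℕ)) * (n - 2 - (K:ℕ)) : ℕ) : ℝ) / ((n:ℝ) - 2)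
    with hD
  have hDpos : ∀ K, (0:ℝ) < D K := by
    intro K
    rw [hD]
    positivity
  have hDprod_pos : (0:ℝ) < ∏ K : Fin n, D K := Finset.prod_pos fun K _ => hDpos K
  set T := (Tset L).card with hT
  rcases Nat.eq_zero_or_pos T with hT0 | hT1
  · rw [hT0]; push_cast; exact hDprod_pos.le
  have hTpos : (0:ℝ) < T := by exact_mod_cast hT1
  have hNpos : ∀ (π σ : Equiv.Perm (Fin n)), σ ∈ Tset L → ∀ K, (0:ℝ) < (Nv L π σ K : ℝ) := by
    intro π σ hσ K
    exact_mod_cast Nv_pos L ((mem_Tset L).mp hσ) K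
  have per_pi : ∀ π : Equiv.Perm (Fin n),
      ((T:ℝ))^T ≤ ∏ σ ∈ Tset L, ∏ K : Fin n, (Nv L π σ K : ℝ) := by
    intro π
    have hZpos : (0:ℝ) < ∏ σ ∈ Tset L, ∏ K : Fin n, (Nv L π σ K : ℝ) :=
      Finset.prod_pos fun σ hσ => Finset.prod_pos fun K _ => hNpos π σ hσ K
    have hAM := amgm (Tset L) (fun σ => ∏ K : Fin n, ((Nv L π σ K : ℝ))⁻¹)
      (fun σ _ => Finset.prod_nonneg fun K _ => by positivity)
    rw [← hT] at hAM
    have hsum : ((∑ σ ∈ Tset L, ∏ K : Fin n, ((Nv L π σ K : ℝ))⁻¹) / T) ^ T ≤ (1 / T) ^ T := by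
      apply pow_le_pow_left₀
      · apply div_nonneg _ hTpos.le
        exact Finset.sum_nonneg fun σ _ => Finset.prod_nonneg fun K _ => by positivity
      · exact div_le_div_of_nonneg_right (kraft L π) hTpos.le
    have hinv : (∏ σ ∈ Tset L, ∏ K : Fin n, ((Nv L π σ K : ℝ))⁻¹)
        = (∏ σ ∈ Tset L, ∏ K : Fin n, (Nv L π σ K : ℝ))⁻¹ := by
      rw [← Finset.prod_inv_distrib]
      exact Finset.prod_congr rfl fun σ _ => by rw [← Finset.prod_inv_distrib]
    have hchain : (∏ σ ∈ Tset L, ∏ K : Fin n, (Nv L π σ K : ℝ))⁻¹ ≤ ((T:ℝ)^T)⁻¹ := by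
      rw [← hinv]
      calc ∏ σ ∈ Tset L, ∏ K : Fin n, ((Nv L π σ K : ℝ))⁻¹
          ≤ ((∑ σ ∈ Tset L, ∏ K : Fin n, ((Nv L π σ K : ℝ))⁻¹) / T) ^ T := hAM
        _ ≤ (1 / T) ^ T := hsum
        _ = ((T:ℝ)^T)⁻¹ := by rw [one_div, inv_pow]
    exact (inv_le_inv₀ hZpos (pow_pos hTpos T)).mp hchain
  have hfac_ne : ((n.factorial : ℕ) : ℝ) ≠ 0 :=
    Nat.cast_ne_zero.mpr (Nat.factorial_ne_zero n)
  have hBr : ((n * (n-1) * (n-3).factorial : ℕ) : ℝ) * ((n:ℝ) - 2) = (n.factorial : ℝ) := by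
    have h2 : ((n:ℝ) - 2) = ((n - 2 : ℕ) : ℝ) := by
      rw [Nat.cast_sub (by omega)]; norm_num
    rw [h2, ← Nat.cast_mul, fact_ratio hn]
  have keyK : ∀ σ ∈ Tset L, ∀ K : Fin n,
      ∏ π : Equiv.Perm (Fin n), (Nv L π σ K : ℝ) ≤ (D K) ^ (n.factorial) := by
    intro σ hσ K
    have hσT : IsTransversal L σ := (mem_Tset L).mp hσ
    have hAM := amgm (univ : Finset (Equiv.Perm (Fin n))) (fun π => (Nv L π σ K : ℝ))
      (fun π _ => by positivity)
    have hcard : (univ : Finset (Equiv.Perm (Fin n))).card = n.factorial := by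
      rw [Finset.card_univ, Fintype.card_perm, Fintype.card_fin]
    rw [hcard] at hAM
    refine hAM.trans ?_
    apply pow_le_pow_left₀ (by positivity)
    have hsum' : (∑ π : Equiv.Perm (Fin n), (Nv L π σ K : ℝ))
        ≤ ((n.factorial : ℕ) : ℝ) + (((n - 1 - (K:ℕ)) * (n - 2 - (K:ℕ)) : ℕ) : ℝ)
            * ((n * (n-1) * (n-3).factorial : ℕ) : ℝ) := by
      rw [← Nat.cast_sum]
      push_cast [← Nat.cast_add]
      exact_mod_cast sum_Nv_le L hL hσT K
    calc (∑ π : Equiv.Perm (Fin n), (Nv L π σ K : ℝ)) / (n.factorial : ℝ)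
        ≤ (((n.factorial : ℕ) : ℝ) + (((n - 1 - (K:ℕ)) * (n - 2 - (K:ℕ)) : ℕ) : ℝ)
            * ((n * (n-1) * (n-3).factorial : ℕ) : ℝ)) / (n.factorial : ℝ) :=
          div_le_div_of_nonneg_right hsum' (by positivity)
      _ = D K := by
          rw [hD]
          have hB : ((n * (n-1) * (n-3).factorial : ℕ) : ℝ) = (n.factorial : ℝ) / ((n:ℝ) - 2) :=
            (eq_div_iff hq.ne').mpr hBr
          rw [hB]
          field_simp
  have big : ((T:ℝ))^(T * n.factorial) ≤ (∏ K : Fin n, D K) ^ (n.factorial * T) := by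
    calc ((T:ℝ))^(T * n.factorial) = ∏ _π : Equiv.Perm (Fin n), ((T:ℝ))^T := by
          rw [Finset.prod_const, Finset.card_univ, Fintype.card_perm, Fintype.card_fin, ← pow_mul]
      _ ≤ ∏ π : Equiv.Perm (Fin n), ∏ σ ∈ Tset L, ∏ K : Fin n, (Nv L π σ K : ℝ) :=
          Finset.prod_le_prod (fun _ _ => by positivity) (fun π _ => per_pi π)
      _ = ∏ σ ∈ Tset L, ∏ K : Fin n, ∏ π : Equiv.Perm (Fin n), (Nv L π σ K : ℝ) := by
          rw [Finset.prod_comm]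
          exact Finset.prod_congr rfl fun σ _ => Finset.prod_comm
      _ ≤ ∏ σ ∈ Tset L, ∏ K : Fin n, (D K) ^ n.factorial := by
          apply Finset.prod_le_prod
          · intro σ hσ
            exact Finset.prod_nonneg fun K _ => Finset.prod_nonneg fun π _ => by positivity
          · intro σ hσ
            apply Finset.prod_le_prod
            · intro K _
              exact Finset.prod_nonneg fun π _ => by positivity
            · intro K _
              exact keyK σ hσ K
      _ = (∏ K : Fin n, D K) ^ (n.factorial * T) := by
          rw [Finset.prod_pow, Finset.prod_const, ← hT, ← pow_mul]
  have hTn : T * n.factorial ≠ 0 := Nat.mul_ne_zero (by omega) (Nat.factorial_ne_zero n)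
  apply le_of_pow_le_pow_left₀ hTn hDprod_pos.le
  rw [mul_comm n.factorial T] at big
  exact big


lemma prod_range_cast_factorial (n : ℕ) :
    ∏ j ∈ Finset.range n, ((j:ℝ) + 1) = (n.factorial : ℝ) := by
  induction n with
  | zero => simp
  | succ m ih =>
    rw [Finset.prod_range_succ, ih, Nat.factorial_succ]
    push_cast
    ring

lemma harmonic_le {n : ℕ} (hn : 1 ≤ n) :
    ∑ j ∈ Finset.range n, (1:ℝ)/((j:ℝ)+1) ≤ 1 + Real.log n := by
  obtain ⟨m, rfl⟩ : ∃ m, n = m + 1 := ⟨n - 1, by omega⟩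
  rw [Finset.sum_range_succ']
  have step : ∀ j : ℕ, (1:ℝ)/((↑(j+1):ℝ)+1)
      ≤ Real.log ((j:ℝ)+1+1) - Real.log ((j:ℝ)+1) := by
    intro j
    have hj1 : (0:ℝ) < (j:ℝ)+1 := by positivity
    have hj2 : (0:ℝ) < (j:ℝ)+1+1 := by positivity
    have hlog := Real.log_le_sub_one_of_pos (show (0:ℝ) < ((j:ℝ)+1)/((j:ℝ)+1+1) by positivity)
    rw [Real.log_div hj1.ne' hj2.ne'] at hlog
    have heq : ((j:ℝ)+1)/((j:ℝ)+1+1) - 1 = -(1/((j:ℝ)+1+1)) := by field_simp; ring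
    rw [heq] at hlog
    push_cast
    linarith
  have tel : ∑ j ∈ Finset.range m, (Real.log ((j:ℝ)+1+1) - Real.log ((j:ℝ)+1))
      = Real.log ((m:ℝ)+1) := by
    have h := Finset.sum_range_sub (fun j : ℕ => Real.log ((j:ℝ)+1)) m
    simp only [Nat.cast_add, Nat.cast_one] at h
    rw [h]
    simp
  have hsum : ∑ j ∈ Finset.range m, (1:ℝ)/((↑(j+1):ℝ)+1) ≤ Real.log ((m:ℝ)+1) := by
    rw [← tel]
    exact Finset.sum_le_sum fun j _ => step j
  push_cast
  push_cast at hsum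
  linarith

lemma factorial_le_stirling {n : ℕ} (hn : 1 ≤ n) :
    (n.factorial : ℝ) ≤ Real.exp 1 * Real.sqrt n * ((n:ℝ)/Real.exp 1)^n := by
  obtain ⟨m, rfl⟩ : ∃ m, n = m + 1 := ⟨n - 1, by omega⟩
  have hcpos : (0:ℝ) < ((m+1 : ℕ) : ℝ) := by positivity
  have hP : (0:ℝ) < (((m+1 : ℕ) : ℝ)/Real.exp 1)^(m+1) := by positivity
  have hs2 : (0:ℝ) < Real.sqrt 2 := by positivity
  have hD : (0:ℝ) < Real.sqrt (2*((m+1 : ℕ) : ℝ)) * (((m+1 : ℕ) : ℝ)/Real.exp 1)^(m+1) :=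
    mul_pos (Real.sqrt_pos.mpr (by linarith)) hP
  have key : (((m+1).factorial : ℕ) : ℝ)
      = Stirling.stirlingSeq (m+1)
          * (Real.sqrt (2*((m+1 : ℕ) : ℝ)) * (((m+1 : ℕ) : ℝ)/Real.exp 1)^(m+1)) := by
    rw [Stirling.stirlingSeq]
    field_simp
  have hmono : Stirling.stirlingSeq (m+1) ≤ Real.exp 1 / Real.sqrt 2 := by
    have h := Stirling.stirlingSeq'_antitone (Nat.zero_le m)
    simpa [Function.comp, Stirling.stirlingSeq_one] using h
  calc (((m+1).factorial : ℕ) : ℝ)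
      = Stirling.stirlingSeq (m+1)
          * (Real.sqrt (2*((m+1 : ℕ) : ℝ)) * (((m+1 : ℕ) : ℝ)/Real.exp 1)^(m+1)) := key
    _ ≤ (Real.exp 1 / Real.sqrt 2)
          * (Real.sqrt (2*((m+1 : ℕ) : ℝ)) * (((m+1 : ℕ) : ℝ)/Real.exp 1)^(m+1)) :=
        mul_le_mul_of_nonneg_right hmono hD.le
    _ = Real.exp 1 * Real.sqrt ((m+1 : ℕ) : ℝ) * (((m+1 : ℕ) : ℝ)/Real.exp 1)^(m+1) := by
        rw [Real.sqrt_mul (by norm_num : (0:ℝ) ≤ 2) (((m+1 : ℕ) : ℝ))]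
        field_simp

lemma self_le_exp (t : ℝ) : t ≤ Real.exp t := by
  have := Real.add_one_le_exp t
  linarith

lemma prod_D_reindex (n : ℕ) :
    ∏ K : Fin n, (1 + (((n - 1 - (K:ℕ)) * (n - 2 - (K:ℕ)) : ℕ) : ℝ) / ((n:ℝ) - 2))
      = ∏ j ∈ Finset.range n, (1 + (((j * (j-1)) : ℕ) : ℝ) / ((n:ℝ) - 2)) := by
  rw [Fin.prod_univ_eq_prod_range
    (fun m => 1 + (((n - 1 - m) * (n - 2 - m) : ℕ) : ℝ) / ((n:ℝ) - 2)) n]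
  rw [← Finset.prod_range_reflect (fun j => 1 + (((j * (j-1)) : ℕ) : ℝ) / ((n:ℝ) - 2)) n]
  apply Finset.prod_congr rfl
  intro m hm
  have h : (n - 1 - m) * (n - 1 - m - 1) = (n - 1 - m) * (n - 2 - m) := by
    rcases le_or_gt (n - 1) m with h' | h'
    · have h1 : n - 1 - m = 0 := by omega
      rw [h1]
      simp
    · congr 1
      omega
  rw [← h]

lemma analytic {ε : ℝ} (hε : 0 < ε) :
    ∃ N₀ : ℕ, 9 ≤ N₀ ∧ ∀ n : ℕ, N₀ ≤ n →
      ∏ K : Fin n, (1 + (((n - 1 - (K:ℕ)) * (n - 2 - (K:ℕ)) : ℕ) : ℝ) / ((n:ℝ) - 2))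
        ≤ ((1 + ε) / Real.exp 1) ^ n * (n.factorial : ℝ) := by
  set l := Real.log (1+ε) with hl
  have hlpos : 0 < l := Real.log_pos (by linarith)
  refine ⟨max 9 ⌈(13/l)^4⌉₊, le_max_left _ _, ?_⟩
  intro n hn
  have hn9 : 9 ≤ n := le_trans (le_max_left _ _) hn
  have hnx : ((13/l)^4 : ℝ) ≤ (n:ℝ) :=
    Nat.ceil_le.mp (le_trans (le_max_right _ _) hn)
  have hnR : (9:ℝ) ≤ (n:ℝ) := by exact_mod_cast hn9
  have hq : (0:ℝ) < (n:ℝ) - 2 := by linarith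
  set q : ℝ := (n:ℝ) - 2 with hqdef
  set s : ℝ := Real.sqrt q with hsdef
  have hspos : 0 < s := Real.sqrt_pos.mpr hq
  have hs2 : s^2 = q := Real.sq_sqrt hq.le
  have hsn : s ≤ Real.sqrt n := Real.sqrt_le_sqrt (by rw [hqdef]; linarith)
  set x : ℝ := Real.sqrt (Real.sqrt n) with hxdef
  have hxn : x^2 = Real.sqrt n := Real.sq_sqrt (Real.sqrt_nonneg _)
  have hx4 : x^4 = (n:ℝ) := by
    have h1 : ((x^2)^2 : ℝ) = (n:ℝ) := by rw [hxn]; exact Real.sq_sqrt (by positivity)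
    calc x^4 = (x^2)^2 := by ring
      _ = (n:ℝ) := h1
  have hx1 : 1 ≤ x := by
    rw [hxdef]
    apply Real.one_le_sqrt.mpr
    apply Real.one_le_sqrt.mpr
    linarith
  have hxl : 13/l ≤ x := by
    apply le_of_pow_le_pow_left₀ (by norm_num : (4:ℕ) ≠ 0) (by linarith)
    rw [hx4]
    exact hnx
  have hfac_pos : (0:ℝ) < (n.factorial : ℝ) := by exact_mod_cast n.factorial_pos
  rw [prod_D_reindex n]
  have step1 : ∏ j ∈ Finset.range n, (1 + (((j * (j-1)) : ℕ) : ℝ) / q)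
      ≤ (∏ j ∈ Finset.range n, (1 + (j:ℝ)/s))^2 := by
    rw [← Finset.prod_pow]
    apply Finset.prod_le_prod
    · intro j _; positivity
    · intro j _
      have hcast : (((j * (j-1)) : ℕ) : ℝ) ≤ (j:ℝ) * (j:ℝ) := by
        have h1 : (j * (j-1) : ℕ) ≤ j * j := Nat.mul_le_mul_left j (Nat.sub_le j 1)
        exact_mod_cast h1
      have hexp : (1 + (j:ℝ)/s)^2 = 1 + 2*((j:ℝ)/s) + ((j:ℝ)*(j:ℝ))/q := by
        rw [← hs2]; field_simp; ring
      rw [hexp]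
      have h1 : (((j * (j-1)) : ℕ) : ℝ)/q ≤ ((j:ℝ)*(j:ℝ))/q :=
        div_le_div_of_nonneg_right hcast hq.le
      have h2 : 0 ≤ ((j:ℝ)/s) := by positivity
      linarith
  have step2 : ∏ j ∈ Finset.range n, (1 + (j:ℝ)/s)
      ≤ (n.factorial : ℝ) * Real.exp (s * (1 + Real.log n)) / s^n := by
    have e1 : ∀ j ∈ Finset.range n, (1 + (j:ℝ)/s) ≤ ((j:ℝ) + 1 + s)/s := by
      intro j _
      have h' : 1 + (j:ℝ)/s = (s + j)/s := by field_simp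
      rw [h']
      apply div_le_div_of_nonneg_right _ hspos.le
      linarith
    calc ∏ j ∈ Finset.range n, (1 + (j:ℝ)/s)
        ≤ ∏ j ∈ Finset.range n, ((j:ℝ) + 1 + s)/s :=
          Finset.prod_le_prod (fun j _ => by positivity) e1
      _ = (∏ j ∈ Finset.range n, (((j:ℝ) + 1) * (1 + s/((j:ℝ)+1)))) / s^n := by
          rw [Finset.prod_div_distrib, Finset.prod_const, Finset.card_range]
          congr 1
          apply Finset.prod_congr rfl
          intro j _
          have hj : ((j:ℝ)+1) ≠ 0 := by positivity
          field_simp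
      _ ≤ (∏ j ∈ Finset.range n, (((j:ℝ) + 1) * Real.exp (s/((j:ℝ)+1)))) / s^n := by
          apply div_le_div_of_nonneg_right _ (by positivity)
          apply Finset.prod_le_prod
          · intro j _; positivity
          · intro j _
            apply mul_le_mul_of_nonneg_left _ (by positivity)
            have := Real.add_one_le_exp (s/((j:ℝ)+1))
            linarith
      _ = (n.factorial : ℝ) * Real.exp (∑ j ∈ Finset.range n, s/((j:ℝ)+1)) / s^n := by
          rw [Finset.prod_mul_distrib, prod_range_cast_factorial, Real.exp_sum]
      _ ≤ (n.factorial : ℝ) * Real.exp (s * (1 + Real.log n)) / s^n := by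
          apply div_le_div_of_nonneg_right _ (by positivity)
          apply mul_le_mul_of_nonneg_left _ hfac_pos.le
          apply Real.exp_le_exp.mpr
          have hsum : ∑ j ∈ Finset.range n, s/((j:ℝ)+1)
              = s * ∑ j ∈ Finset.range n, (1:ℝ)/((j:ℝ)+1) := by
            rw [Finset.mul_sum]
            apply Finset.sum_congr rfl
            intro j _
            rw [mul_one_div]
          rw [hsum]
          exact mul_le_mul_of_nonneg_left (harmonic_le (by omega)) hspos.le
  have hprod_nonneg : (0:ℝ) ≤ ∏ j ∈ Finset.range n, (1 + (j:ℝ)/s) :=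
    Finset.prod_nonneg fun j _ => by positivity
  have step3 : ∏ j ∈ Finset.range n, (1 + (((j * (j-1)) : ℕ) : ℝ) / q)
      ≤ ((n.factorial : ℝ))^2 * Real.exp (2 * s * (1 + Real.log n)) / q^n := by
    calc ∏ j ∈ Finset.range n, (1 + (((j * (j-1)) : ℕ) : ℝ) / q)
        ≤ (∏ j ∈ Finset.range n, (1 + (j:ℝ)/s))^2 := step1
      _ ≤ ((n.factorial : ℝ) * Real.exp (s * (1 + Real.log n)) / s^n)^2 :=
          pow_le_pow_left₀ hprod_nonneg step2 2
      _ = ((n.factorial : ℝ))^2 * Real.exp (2 * s * (1 + Real.log n)) / q^n := by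
          rw [div_pow, mul_pow]
          rw [show ((s:ℝ)^n)^2 = (s^2)^n by ring, hs2]
          rw [show (Real.exp (s * (1 + Real.log n)))^2 = Real.exp (2 * (s * (1 + Real.log n))) by
            rw [← Real.exp_nat_mul]; norm_num]
          ring_nf
  refine le_trans step3 ?_
  have hqn : (0:ℝ) < q^n := by positivity
  rw [div_le_iff₀ hqn]
  have hstir := factorial_le_stirling (show 1 ≤ n by omega)
  have hlogn : Real.log n ≤ 4*x - 4 := by
    have h1 : Real.log n = 4 * Real.log x := by
      rw [← hx4, Real.log_pow]
      norm_num
    have h2 : Real.log x ≤ x - 1 := by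
      have := Real.log_le_sub_one_of_pos (show (0:ℝ) < x by linarith)
      linarith
    linarith
  have hsx : s ≤ x^2 := by rw [hxn]; exact hsn
  have hexp_bound : Real.exp 1 * Real.sqrt n * Real.exp (2 * s * (1 + Real.log n)) * (n:ℝ)^n
      ≤ Real.exp ((n:ℝ) * l) * q^n := by
    have hnq : (n:ℝ)^n ≤ q^n * Real.exp 4 := by
      have h1 : (n:ℝ) ≤ q * Real.exp (2/q) := by
        have ha := Real.add_one_le_exp (2/q)
        have h2 : (n:ℝ) = q * (1 + 2/q) := by
          have hq0 : (n:ℝ) - 2 ≠ 0 := hq.ne'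
          rw [hqdef]; field_simp <;> ring
        nlinarith [hq]
      calc (n:ℝ)^n ≤ (q * Real.exp (2/q))^n := pow_le_pow_left₀ (by positivity) h1 n
        _ = q^n * (Real.exp (2/q))^n := mul_pow _ _ _
        _ = q^n * Real.exp ((n:ℝ) * (2/q)) := by rw [← Real.exp_nat_mul]
        _ ≤ q^n * Real.exp 4 := by
            apply mul_le_mul_of_nonneg_left _ hqn.le
            apply Real.exp_le_exp.mpr
            have : (n:ℝ) * (2/q) = 2*(n:ℝ)/q := by ring
            rw [this, div_le_iff₀ hq]
            rw [hqdef]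
            linarith
    have hsqrtn : Real.sqrt n ≤ Real.exp (x^2) := by
      rw [← hxn]
      exact self_le_exp _
    have hlog_nonneg : (0:ℝ) ≤ Real.log n := Real.log_nonneg (by linarith)
    have hmain : 1 + x^2 + 4 + 2 * s * (1 + Real.log n) ≤ (n:ℝ) * l := by
      have h1 : 2 * s * (1 + Real.log n) ≤ 2 * x^2 * (4*x - 3) := by
        have ha : 1 + Real.log n ≤ 4*x - 3 := by linarith
        have hc : (0:ℝ) < 4*x - 3 := by nlinarith
        nlinarith [hspos, hsx, hx1]
      have h2 : 5 + x^2 + 2*x^2*(4*x-3) ≤ 13 * x^3 := by nlinarith [hx1]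
      have h3 : 13 * x^3 ≤ (n:ℝ) * l := by
        have hd : 13 ≤ x * l := by
          rw [div_le_iff₀ hlpos] at hxl
          linarith
        calc 13 * x^3 ≤ (x*l) * x^3 := by nlinarith [hx1]
          _ = x^4 * l := by ring
          _ = (n:ℝ) * l := by rw [hx4]
      linarith
    calc Real.exp 1 * Real.sqrt n * Real.exp (2 * s * (1 + Real.log n)) * (n:ℝ)^n
        ≤ Real.exp 1 * Real.exp (x^2) * Real.exp (2 * s * (1 + Real.log n)) * (q^n * Real.exp 4) := by
          apply mul_le_mul
          · apply mul_le_mul_of_nonneg_right _ (by positivity)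
            exact mul_le_mul_of_nonneg_left hsqrtn (by positivity)
          · exact hnq
          · positivity
          · positivity
      _ = Real.exp (1 + x^2 + 4 + 2 * s * (1 + Real.log n)) * q^n := by
          have hre : Real.exp 1 * Real.exp (x^2) * Real.exp (2 * s * (1 + Real.log n))
              * (q^n * Real.exp 4)
              = (Real.exp 1 * Real.exp (x^2) * Real.exp 4
                  * Real.exp (2 * s * (1 + Real.log n))) * q^n := by ring
          rw [hre, ← Real.exp_add, ← Real.exp_add, ← Real.exp_add]
      _ ≤ Real.exp ((n:ℝ) * l) * q^n :=
          mul_le_mul_of_nonneg_right (Real.exp_le_exp.mpr hmain) hqn.le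
  have hexpl : Real.exp ((n:ℝ) * l) = (1+ε)^n := by
    rw [Real.exp_nat_mul, hl, Real.exp_log (by linarith : (0:ℝ) < 1 + ε)]
  have hgoal2 : (n.factorial : ℝ) * Real.exp (2*s*(1 + Real.log n))
      ≤ ((1+ε)/Real.exp 1)^n * q^n := by
    have hepos : (0:ℝ) < Real.exp 1 ^ n := by positivity
    calc (n.factorial : ℝ) * Real.exp (2*s*(1+Real.log n))
        ≤ (Real.exp 1 * Real.sqrt n * ((n:ℝ)/Real.exp 1)^n) * Real.exp (2*s*(1+Real.log n)) :=
          mul_le_mul_of_nonneg_right hstir (by positivity)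
      _ = (Real.exp 1 * Real.sqrt n * Real.exp (2*s*(1+Real.log n)) * (n:ℝ)^n)
            / Real.exp 1 ^ n := by
          rw [div_pow]; ring
      _ ≤ (Real.exp ((n:ℝ) * l) * q^n) / Real.exp 1 ^ n :=
          div_le_div_of_nonneg_right hexp_bound hepos.le
      _ = ((1+ε)/Real.exp 1)^n * q^n := by
          rw [hexpl, div_pow]
          ring
  calc ((n.factorial : ℝ))^2 * Real.exp (2 * s * (1 + Real.log n))
      = (n.factorial : ℝ) * ((n.factorial : ℝ) * Real.exp (2*s*(1 + Real.log n))) := by ring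
    _ ≤ (n.factorial : ℝ) * (((1+ε)/Real.exp 1)^n * q^n) :=
          mul_le_mul_of_nonneg_left hgoal2 hfac_pos.le
    _ = ((1 + ε) / Real.exp 1) ^ n * (n.factorial : ℝ) * q^n := by ring


lemma transversalCount_eq (L : Fin n → Fin n → Fin n) :
    transversalCount L = (Tset L).card := by
  classical
  rw [transversalCount, Nat.card_eq_fintype_card]
  exact Fintype.card_of_subtype (Tset L) (fun σ => mem_Tset L)

end LTUB

theorem latin_square_transversal_upper_bound_factorial :
    ∀ ε : ℝ, 0 < ε → ∃ N₀ : ℕ, ∀ n : ℕ, N₀ ≤ n →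
      ∀ L : Fin n → Fin n → Fin n, IsLatinSquare L →
        (transversalCount L : ℝ) ≤ ((1 + ε) / Real.exp 1) ^ n * (Nat.factorial n) := by
  intro ε hε
  obtain ⟨N₀, hN9, hN⟩ := LTUB.analytic hε
  refine ⟨N₀, fun n hn L hL => ?_⟩
  have h1 := LTUB.main_bound L hL (by omega)
  rw [LTUB.transversalCount_eq L]
  exact le_trans h1 (hN n hn)
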